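/- Let f : ℝ^n → ℝ be continuous, P_0 : ℝ^n → [0, ∞] proper closed with f + P_0 level-bounded (i.e., {x : f(x) + P_0(x) ≤ r} is bounded for every r ∈ ℝ), and for i = 1,…,m let A_i : ℝ^n → ℝ^{n_i} be linear and P_i : ℝ^{n_i} → [0, ∞] proper closed with dom P_i closed. For positive parameters λ = (λ_1,…,λ_m) define F_λ(x) := f(x) + P_0(x) + Σ_{i=1}^m e_{λ_i} P_i(A_i x). Suppose λ_{i,t} > 0 with λ_{i,t} → 0 for each i, C ∈ ℝ, and {x^t} ⊂ ℝ^n satisfies F_{λ_t}(x^t) ≤ C for all t, where λ_t = (λ_{1,t},…,λ_{m,t}). Then {x^t} is bounded, and every accumulation point x* of {x^t} satisfies x* ∈ dom P_0 and A_i x* ∈ dom P_i for all i = 1,…,m. -/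

import Mathlib

open Filter Topology

/-- The Moreau envelope `e_λ h(x) = inf_y { (1/(2λ))‖x − y‖² + h(y) }`. -/
noncomputable def mEnv {d : ℕ} (h : EuclideanSpace ℝ (Fin d) → EReal) (lam : ℝ)
    (x : EuclideanSpace ℝ (Fin d)) : EReal :=
  ⨅ y, (((1 / (2 * lam)) * ‖x - y‖ ^ 2 : ℝ) : EReal) + h y

/-- Let `f` be continuous, `P_0` proper closed nonnegative with `f + P_0`
level-bounded, `A_i` linear and `P_i` proper closed nonnegative with closed
domains.  If `λ_{i,t} > 0`, `λ_{i,t} → 0` and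
`F_{λ_t}(x^t) = f(x^t) + P_0(x^t) + Σ_i e_{λ_{i,t}} P_i(A_i x^t) ≤ C` for all
`t`, then `{x^t}` is bounded and every accumulation point `x*` satisfies
`x* ∈ dom P_0` and `A_i x* ∈ dom P_i` for all `i`. -/
theorem bounded_and_feasible_accumulation {n m : ℕ} {ni : Fin m → ℕ}
    (f : EuclideanSpace ℝ (Fin n) → ℝ) (hf : Continuous f)
    (P0 : EuclideanSpace ℝ (Fin n) → EReal)
    (hP0nn : ∀ x, 0 ≤ P0 x) (hP0proper : ∃ x, P0 x ≠ ⊤)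
    (hP0closed : LowerSemicontinuous P0)
    (hlevel : ∀ r : ℝ, Bornology.IsBounded
      {x : EuclideanSpace ℝ (Fin n) | (f x : EReal) + P0 x ≤ (r : EReal)})
    (A : (i : Fin m) → EuclideanSpace ℝ (Fin n) →L[ℝ] EuclideanSpace ℝ (Fin (ni i)))
    (P : (i : Fin m) → EuclideanSpace ℝ (Fin (ni i)) → EReal)
    (hPnn : ∀ i y, 0 ≤ P i y) (hPproper : ∀ i, ∃ y, P i y ≠ ⊤)
    (hPclosed : ∀ i, LowerSemicontinuous (P i))
    (hPdom : ∀ i, IsClosed {y | P i y ≠ ⊤})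
    (lam : Fin m → ℕ → ℝ) (hlampos : ∀ i t, 0 < lam i t)
    (hlam : ∀ i, Tendsto (lam i) atTop (𝓝 0))
    (C : ℝ) (x : ℕ → EuclideanSpace ℝ (Fin n))
    (hC : ∀ t, (f (x t) : EReal) + P0 (x t) +
      ∑ i, mEnv (P i) (lam i t) (A i (x t)) ≤ (C : EReal)) :
    Bornology.IsBounded (Set.range x) ∧
    ∀ xstar, MapClusterPt xstar atTop x →
      P0 xstar ≠ ⊤ ∧ ∀ i, P i (A i xstar) ≠ ⊤ := by
  -- envelopes are nonnegative
  have envnn : ∀ i t, (0 : EReal) ≤ mEnv (P i) (lam i t) (A i (x t)) := by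
    intro i t
    refine le_iInf fun y => ?_
    have hl := hlampos i t
    have h1 : (0 : ℝ) ≤ (1 / (2 * lam i t)) * ‖A i (x t) - y‖ ^ 2 := by positivity
    exact add_nonneg (by exact_mod_cast h1) (hPnn i y)
  have sumnn : ∀ t, (0 : EReal) ≤ ∑ i, mEnv (P i) (lam i t) (A i (x t)) :=
    fun t => Finset.sum_nonneg fun i _ => envnn i t
  -- level set inclusion
  have keyA : ∀ t, (f (x t) : EReal) + P0 (x t) ≤ (C : EReal) := fun t =>
    le_trans (le_add_of_nonneg_right (sumnn t)) (hC t)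
  have hbdd : Bornology.IsBounded (Set.range x) := by
    refine (hlevel C).subset ?_
    rintro _ ⟨t, rfl⟩
    exact keyA t
  -- bound on ‖f‖ over the sequence
  obtain ⟨M, hM⟩ : ∃ M, ∀ t, ‖f (x t)‖ ≤ M := by
    obtain ⟨M, hM⟩ :=
      hbdd.isCompact_closure.exists_bound_of_continuousOn (hf.continuousOn)
    exact ⟨M, fun t => hM _ (subset_closure ⟨t, rfl⟩)⟩
  have hfM : ∀ t, -M ≤ f (x t) := fun t => neg_le_of_abs_le (hM t)
  -- P0 (x t) ≤ C + M  and each envelope ≤ C + M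
  have hP0bd : ∀ t, P0 (x t) ≤ ((C + M : ℝ) : EReal) := by
    intro t
    have h1 : ((-M : ℝ) : EReal) + P0 (x t) ≤ (C : EReal) :=
      le_trans (add_le_add (by exact_mod_cast hfM t) le_rfl) (keyA t)
    have h2 : P0 (x t) ≤ (C : EReal) - ((-M : ℝ) : EReal) := by
      rw [EReal.le_sub_iff_add_le (Or.inl (EReal.coe_ne_bot _))
        (Or.inl (EReal.coe_ne_top _))]
      rw [add_comm]; exact h1
    calc P0 (x t) ≤ (C : EReal) - ((-M : ℝ) : EReal) := h2
      _ = ((C + M : ℝ) : EReal) := by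
          rw [← EReal.coe_sub]; norm_num
  have henvbd : ∀ i t, mEnv (P i) (lam i t) (A i (x t)) ≤ ((C + M : ℝ) : EReal) := by
    intro i t
    have hsingle : mEnv (P i) (lam i t) (A i (x t)) ≤
        ∑ j, mEnv (P j) (lam j t) (A j (x t)) :=
      Finset.single_le_sum (fun j _ => envnn j t) (Finset.mem_univ i)
    have h1 : ((-M : ℝ) : EReal) + mEnv (P i) (lam i t) (A i (x t)) ≤ (C : EReal) := by
      calc ((-M : ℝ) : EReal) + mEnv (P i) (lam i t) (A i (x t))
          ≤ ((f (x t) : EReal) + P0 (x t)) + ∑ j, mEnv (P j) (lam j t) (A j (x t)) := by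
            refine add_le_add ?_ hsingle
            exact le_trans (by exact_mod_cast hfM t) (le_add_of_nonneg_right (hP0nn _))
        _ ≤ (C : EReal) := hC t
    have h2 : mEnv (P i) (lam i t) (A i (x t)) ≤ (C : EReal) - ((-M : ℝ) : EReal) := by
      rw [EReal.le_sub_iff_add_le (Or.inl (EReal.coe_ne_bot _))
        (Or.inl (EReal.coe_ne_top _))]
      rw [add_comm]; exact h1
    calc mEnv (P i) (lam i t) (A i (x t)) ≤ (C : EReal) - ((-M : ℝ) : EReal) := h2
      _ = ((C + M : ℝ) : EReal) := by rw [← EReal.coe_sub]; norm_num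
  refine ⟨hbdd, fun xstar hcl => ?_⟩
  obtain ⟨φ, hφ, hto⟩ := TopologicalSpace.FirstCountableTopology.tendsto_subseq hcl
  set B : ℝ := max (C + M) 0 + 1 with hB
  have hBpos : 0 < B := by positivity
  have hCMB : ((C + M : ℝ) : EReal) < (B : EReal) := by
    exact_mod_cast lt_of_le_of_lt (le_max_left _ _) (lt_add_one _)
  constructor
  · -- P0 xstar ≠ ⊤
    intro htop
    have hev : ∀ᶠ z in 𝓝 xstar, ((C + M : ℝ) : EReal) < P0 z := by
      apply hP0closed xstar
      rw [htop]; exact EReal.coe_lt_top _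
    obtain ⟨k, hk⟩ := (hto.eventually hev).exists
    exact absurd (hP0bd (φ k)) (not_le.mpr hk)
  · intro i
    -- for each t, a point of dom P i close to A i (x t)
    have hclose : ∀ t, ∃ y, P i y ≠ ⊤ ∧ ‖A i (x t) - y‖ ^ 2 ≤ 2 * lam i t * B := by
      intro t
      have hlt : mEnv (P i) (lam i t) (A i (x t)) < (B : EReal) :=
        lt_of_le_of_lt (henvbd i t) hCMB
      rw [mEnv, iInf_lt_iff] at hlt
      obtain ⟨y, hy⟩ := hlt
      have hPtop : P i y ≠ ⊤ := by
        intro h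
        rw [h, EReal.coe_add_top] at hy
        exact absurd hy (by simp)
      refine ⟨y, hPtop, ?_⟩
      have hq : (((1 / (2 * lam i t)) * ‖A i (x t) - y‖ ^ 2 : ℝ) : EReal) < (B : EReal) :=
        lt_of_le_of_lt (le_add_of_nonneg_right (hPnn i y)) hy
      have hq' : (1 / (2 * lam i t)) * ‖A i (x t) - y‖ ^ 2 < B := by exact_mod_cast hq
      have hl := hlampos i t
      have h2l : 0 < 2 * lam i t := by positivity
      have h3 : ‖A i (x t) - y‖ ^ 2 < B * (2 * lam i t) :=
        (div_lt_iff₀ h2l).mp (by rwa [one_div, inv_mul_eq_div] at hq')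
      rw [mul_comm] at h3
      linarith [h3]
    -- distance to the domain goes to 0
    set D : Set (EuclideanSpace ℝ (Fin (ni i))) := {y | P i y ≠ ⊤} with hD
    have hdist : ∀ t, Metric.infDist (A i (x t)) D ≤ Real.sqrt (2 * lam i t * B) := by
      intro t
      obtain ⟨y, hyD, hy⟩ := hclose t
      calc Metric.infDist (A i (x t)) D ≤ dist (A i (x t)) y :=
            Metric.infDist_le_dist_of_mem hyD
        _ = ‖A i (x t) - y‖ := by rw [dist_eq_norm]
        _ = Real.sqrt (‖A i (x t) - y‖ ^ 2) := by
            rw [Real.sqrt_sq (norm_nonneg _)]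
        _ ≤ Real.sqrt (2 * lam i t * B) := Real.sqrt_le_sqrt hy
    have hAz : Tendsto (fun k => A i (x (φ k))) atTop (𝓝 (A i xstar)) :=
      ((A i).continuous.tendsto _).comp hto
    have htend1 : Tendsto (fun k => Metric.infDist (A i (x (φ k))) D) atTop
        (𝓝 (Metric.infDist (A i xstar) D)) :=
      ((Metric.continuous_infDist_pt D).tendsto _).comp hAz
    have hlam0 : Tendsto (fun k => lam i (φ k)) atTop (𝓝 0) :=
      (hlam i).comp hφ.tendsto_atTop
    have htend2 : Tendsto (fun k => Real.sqrt (2 * lam i (φ k) * B)) atTop (𝓝 0) := by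
      have : Tendsto (fun k => 2 * lam i (φ k) * B) atTop (𝓝 0) := by
        have := (hlam0.const_mul 2).mul_const B
        simpa using this
      have h := (Real.continuous_sqrt.tendsto 0).comp this
      simpa [Function.comp_def] using h
    have hle : Metric.infDist (A i xstar) D ≤ 0 :=
      le_of_tendsto_of_tendsto' htend1 htend2 fun k => hdist (φ k)
    have heq : Metric.infDist (A i xstar) D = 0 :=
      le_antisymm hle Metric.infDist_nonneg
    have hmem : A i xstar ∈ D :=
      ((hPdom i).mem_iff_infDist_zero (hPproper i)).mpr heq
    exact hmem
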